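/- For every n ≥ 4, the complete bipartite graph K_{2,n} satisfies m(K_{2,n}) = 4; that is, K_{2,n} is [2,3]-paintable but not [2,4]-paintable. -/

import Mathlib

/- # Preliminaries: the online list-coloring (painting) game -/

namespace PaintGame

open SimpleGraph

/-- `X` is an independent set of vertices of `G`. -/
def IndepOn {V : Type} (G : SimpleGraph V) (X : Finset V) : Prop :=
  ∀ u ∈ X, ∀ w ∈ X, ¬ G.Adj u w

/-- Decrease the remaining mark-capacity of every vertex in the marked set `M` by one. -/
def decMark {V : Type} [DecidableEq V] (f : V → ℕ) (M : Finset V) : V → ℕ :=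
  fun v => if v ∈ M then f v - 1 else f v

theorem decMark_lt {V : Type} [Fintype V] [DecidableEq V] (f : V → ℕ) (M : Finset V)
    (hne : M.Nonempty) (hf : ∀ v ∈ M, 1 ≤ f v) :
    ∑ v, decMark f M v < ∑ v, f v := by
  obtain ⟨v₀, hv₀⟩ := hne
  apply Finset.sum_lt_sum
  · intro i _
    unfold decMark
    split <;> omega
  · refine ⟨v₀, Finset.mem_univ v₀, ?_⟩
    have := hf v₀ hv₀
    simp only [decMark, if_pos hv₀]
    omega

/-- Painter wins the (unbounded) painting game on `G` from the position in which `U` is the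
set of uncolored vertices and `f v` is the number of further times `v` may be marked.
Each round, Lister marks a nonempty set `M` of uncolored vertices, each of which may still
be marked; Painter then colors an independent subset `X` of `M`.  Painter wins when every
vertex is colored; Painter has lost if some uncolored vertex can no longer be marked. -/
def PaintFrom {V : Type} [Fintype V] [DecidableEq V] (G : SimpleGraph V)
    (f : V → ℕ) (U : Finset V) : Prop :=
  U = ∅ ∨ ((∀ v ∈ U, 1 ≤ f v) ∧
    ∀ M : Finset V, M ⊆ U → (hne : M.Nonempty) → (hf : ∀ v ∈ M, 1 ≤ f v) →
      ∃ X : Finset V, X ⊆ M ∧ IndepOn G X ∧ PaintFrom G (decMark f M) (U \ X))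
termination_by ∑ v, f v
decreasing_by exact decMark_lt f M hne hf

/-- `G` is `f`-paintable: Painter can guarantee that every vertex of `G` gets colored
while no vertex `v` is marked more than `f v` times. -/
def Paintable {V : Type} [Fintype V] [DecidableEq V] (G : SimpleGraph V) (f : V → ℕ) : Prop :=
  PaintFrom G f Finset.univ

/-- Painter wins the painting game on `G` lasting exactly `t` further rounds, where `U`
is the set of uncolored vertices and each vertex `v` must be marked in exactly `f v` of the
remaining rounds.  Each round Lister marks a nonempty set `M` of vertices that can still be
marked (colored vertices may be marked, since the marked sets are the color classes of a
fixed list assignment using exactly `t` colors); Painter colors an independent set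
`X ⊆ M` of uncolored vertices.  At the end, Painter wins if every vertex got colored, or by
default if Lister failed to mark every vertex `v` exactly `f v` times. -/
def PaintFromIn {V : Type} [DecidableEq V] (G : SimpleGraph V) :
    ℕ → (V → ℕ) → Finset V → Prop
  | 0, f, U => U = ∅ ∨ ∃ v, f v ≠ 0
  | (t + 1), f, U =>
      ∀ M : Finset V, M.Nonempty → (∀ v ∈ M, 1 ≤ f v) →
        ∃ X : Finset V, X ⊆ M ∩ U ∧ IndepOn G X ∧
          PaintFromIn G t (decMark f M) (U \ X)

/-- `G` is `[f,t]`-paintable: Painter can guarantee that every vertex gets colored in the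
painting game on `G` lasting exactly `t` rounds, in which Lister must mark each vertex `v`
in exactly `f v` of the `t` (nonempty) marked sets. -/
def PaintableIn {V : Type} [Fintype V] [DecidableEq V]
    (G : SimpleGraph V) (f : V → ℕ) (t : ℕ) : Prop :=
  PaintFromIn G t f Finset.univ

/-- `m(G,f)`: the minimum `t ≥ max {f v : v ∈ V(G)}` for which `G` is not
`[f,t]`-paintable. -/
noncomputable def mval {V : Type} [Fintype V] [DecidableEq V]
    (G : SimpleGraph V) (f : V → ℕ) : ℕ :=
  sInf {t | (∀ v, f v ≤ t) ∧ ¬ PaintableIn G f t}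

/-- `M(G,f)`: the maximum `t` for which `G` is not `[f,t]`-paintable. -/
noncomputable def Mval {V : Type} [Fintype V] [DecidableEq V]
    (G : SimpleGraph V) (f : V → ℕ) : ℕ :=
  sSup {t | ¬ PaintableIn G f t}

/-- `ListerForce G f U c`: in the painting game on `G` (uncolored set `U`, each vertex `v`
markable at most `f v` more times), Lister can force the appearance of an uncolorable vertex
(an uncolored vertex that can no longer be marked) while spending at most `c` in total,
where a round with marked set `M` costs `|M| - 1`. -/
def ListerForce {V : Type} [Fintype V] [DecidableEq V] (G : SimpleGraph V)
    (f : V → ℕ) (U : Finset V) (c : ℕ) : Prop :=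
  (∃ v ∈ U, f v = 0) ∨
    ∃ M : Finset V, M ⊆ U ∧ ∃ hne : M.Nonempty, ∃ hf : ∀ v ∈ M, 1 ≤ f v,
      ∃ c', M.card - 1 + c' ≤ c ∧
        ∀ X : Finset V, X ⊆ M → IndepOn G X →
          ListerForce G (decMark f M) (U \ X) c'
termination_by ∑ v, f v
decreasing_by exact decMark_lt f M hne hf

/-- `q(G,f)`: the minimum total cost `Σᵢ (|Vᵢ| - 1)` that Lister can guarantee while
forcing an uncolorable vertex, over plays in which each vertex `v` is marked at most
`f v` times. -/
noncomputable def qval {V : Type} [Fintype V] [DecidableEq V]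
    (G : SimpleGraph V) (f : V → ℕ) : ℕ :=
  sInf {c | ListerForce G f Finset.univ c}

/- # Graph containments -/

/-- `G` contains an odd cycle. -/
def HasOddCycle {V : Type} (G : SimpleGraph V) : Prop :=
  ∃ (v : V) (c : G.Walk v v), c.IsCycle ∧ Odd c.length

/-- `G` contains a triangle `C₃`. -/
def HasTriangle {V : Type} (G : SimpleGraph V) : Prop :=
  ∃ u v w : V, G.Adj u v ∧ G.Adj v w ∧ G.Adj u w

/-- `G` contains the theta graph `θ_{p,q,r}`: two vertices joined by three internally
disjoint paths with `p`, `q` and `r` edges respectively. -/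
def HasTheta {V : Type} (G : SimpleGraph V) (p q r : ℕ) : Prop :=
  ∃ (u v : V) (P Q R : G.Walk u v),
    P.IsPath ∧ Q.IsPath ∧ R.IsPath ∧
    P.length = p ∧ Q.length = q ∧ R.length = r ∧
    (∀ x, x ∈ P.support → x ∈ Q.support → x = u ∨ x = v) ∧
    (∀ x, x ∈ P.support → x ∈ R.support → x = u ∨ x = v) ∧
    (∀ x, x ∈ Q.support → x ∈ R.support → x = u ∨ x = v)

/-- `G` contains a graph of the form `C_m·P_k·C_n`: two cycles joined by a path, the
cycles being vertex disjoint, except that when the path is trivial (`k = 1`) the two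
cycles share exactly one vertex. -/
def HasDumbbell {V : Type} (G : SimpleGraph V) : Prop :=
  ∃ (a b : V) (c : G.Walk a a) (d : G.Walk b b) (W : G.Walk a b),
    c.IsCycle ∧ d.IsCycle ∧ W.IsPath ∧
    (∀ x, x ∈ c.support → x ∈ d.support → x = a ∧ x = b) ∧
    (∀ x, x ∈ W.support → x ∈ c.support → x = a) ∧
    (∀ x, x ∈ W.support → x ∈ d.support → x = b)

/-- `G` contains a copy of `H` as a (not necessarily induced) subgraph. -/
def ContainsCopy {W V : Type} (H : SimpleGraph W) (G : SimpleGraph V) : Prop :=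
  ∃ φ : H →g G, Function.Injective φ

/-- `G` contains a member of the family `𝔉₃`: some `θ_{p,q,r}` that is not isomorphic to
any `θ_{2,2,2k}`. -/
def ContainsF3 {V : Type} (G : SimpleGraph V) : Prop :=
  ∃ p q r : ℕ, HasTheta G p q r ∧ ∀ k : ℕ, ({p, q, r} : Multiset ℕ) ≠ {2, 2, 2 * k}

/-- `G` contains a member of the family `𝔉₄ = {θ_{2,2,2k} : k ≥ 2}`. -/
def ContainsF4 {V : Type} (G : SimpleGraph V) : Prop :=
  ∃ k : ℕ, 2 ≤ k ∧ HasTheta G 2 2 (2 * k)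

/- # The core of a graph -/

open Classical in
/-- Delete from `S` all vertices having exactly one neighbour (in `G`) inside `S`. -/
noncomputable def coreStep {V : Type} [DecidableEq V] (G : SimpleGraph V)
    (S : Finset V) : Finset V :=
  S.filter fun v => ¬ ((S.filter fun w => G.Adj v w).card = 1)

/-- The vertex set of the core of `G`: iteratively delete all vertices of degree 1. -/
noncomputable def coreSet {V : Type} [Fintype V] [DecidableEq V] (G : SimpleGraph V) :
    Finset V :=
  (coreStep G)^[Fintype.card V] Finset.univ

/-- The core of `G`: the subgraph of `G` obtained by the iterated removal of all
vertices of degree 1. -/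
noncomputable def coreGraph {V : Type} [Fintype V] [DecidableEq V] (G : SimpleGraph V) :
    SimpleGraph ↥((coreSet G : Set V)) :=
  G.induce (coreSet G : Set V)

end PaintGame

open SimpleGraph PaintGame

open SimpleGraph PaintGame

section Aux

variable {V : Type} [Fintype V] [DecidableEq V] {G : SimpleGraph V}

lemma pf_zero {f : V → ℕ} {U : Finset V} :
    PaintFromIn G 0 f U ↔ (U = ∅ ∨ ∃ v, f v ≠ 0) := Iff.rfl

lemma pf_succ {t : ℕ} {f : V → ℕ} {U : Finset V} :
    PaintFromIn G (t + 1) f U ↔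
      ∀ M : Finset V, M.Nonempty → (∀ v ∈ M, 1 ≤ f v) →
        ∃ X : Finset V, X ⊆ M ∩ U ∧ IndepOn G X ∧
          PaintFromIn G t (decMark f M) (U \ X) := Iff.rfl

lemma indepOn_mono {X Y : Finset V} (h : X ⊆ Y) (hY : IndepOn G Y) : IndepOn G X :=
  fun u hu w hw => hY u (h hu) w (h hw)

lemma indepOn_empty : IndepOn G (∅ : Finset V) := by
  intro u hu; simp at hu

/-- If some vertex has more required marks than remaining rounds, Painter wins by default. -/
lemma pf_default : ∀ (t : ℕ) (f : V → ℕ) (U : Finset V),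
    (∃ v, t < f v) → PaintFromIn G t f U := by
  intro t
  induction t with
  | zero =>
    rintro f U ⟨v, hv⟩
    exact Or.inr ⟨v, by omega⟩
  | succ t ih =>
    rintro f U ⟨v, hv⟩ M hne hf
    refine ⟨∅, by simp, indepOn_empty, ih _ _ ⟨v, ?_⟩⟩
    simp only [decMark]; split <;> omega

/-- With at least one round to go, an independent uncolored set with all capacities
positive is winnable: color all marked uncolored vertices every round. -/
lemma pf_indep : ∀ (t : ℕ) (f : V → ℕ) (U : Finset V),
    1 ≤ t → IndepOn G U → (∀ v ∈ U, 1 ≤ f v) → PaintFromIn G t f U := by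
  intro t
  induction t with
  | zero => omega
  | succ t ih =>
    intro f U _ hU hf M hne hfM
    refine ⟨M ∩ U, le_refl _, indepOn_mono Finset.inter_subset_right hU, ?_⟩
    have hmem : ∀ v ∈ U \ (M ∩ U), v ∈ U ∧ v ∉ M := by
      intro v hv
      rw [Finset.mem_sdiff, Finset.mem_inter] at hv
      exact ⟨hv.1, fun h => hv.2 ⟨h, hv.1⟩⟩
    have hf' : ∀ v ∈ U \ (M ∩ U), 1 ≤ decMark f M v := by
      intro v hv
      obtain ⟨h1, h2⟩ := hmem v hv
      unfold decMark
      rw [if_neg h2]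
      exact hf v h1
    rcases Nat.eq_zero_or_pos t with rfl | ht
    · rw [pf_zero]
      rcases Finset.eq_empty_or_nonempty (U \ (M ∩ U)) with he | ⟨v, hv⟩
      · exact Or.inl he
      · exact Or.inr ⟨v, by have := hf' v hv; omega⟩
    · exact ih _ _ ht (indepOn_mono (Finset.sdiff_subset) hU) hf'

end Aux

section K2n

abbrev KK (n : ℕ) : SimpleGraph (Fin 2 ⊕ Fin n) := completeBipartiteGraph (Fin 2) (Fin n)

lemma indep_of_left {n : ℕ} (X : Finset (Fin 2 ⊕ Fin n))
    (h : ∀ v ∈ X, ∃ i, v = Sum.inl i) : IndepOn (KK n) X := by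
  intro u hu w hw hadj
  obtain ⟨i, rfl⟩ := h u hu
  obtain ⟨i', rfl⟩ := h w hw
  simp at hadj

lemma indep_of_right {n : ℕ} (X : Finset (Fin 2 ⊕ Fin n))
    (h : ∀ v ∈ X, ∃ j, v = Sum.inr j) : IndepOn (KK n) X := by
  intro u hu w hw hadj
  obtain ⟨i, rfl⟩ := h u hu
  obtain ⟨i', rfl⟩ := h w hw
  simp at hadj

/-- Key two-round lemma: Painter wins with two rounds to go provided every uncolored
right vertex has both marks remaining and some uncolored left vertex does too. -/
lemma pf_two {n : ℕ} (f : Fin 2 ⊕ Fin n → ℕ) (U : Finset (Fin 2 ⊕ Fin n))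
    (ha : ∀ v ∈ U, 1 ≤ f v)
    (hb : ∀ j : Fin n, Sum.inr j ∈ U → f (Sum.inr j) = 2)
    (hc : ∃ i : Fin 2, Sum.inl i ∈ U ∧ f (Sum.inl i) = 2) :
    PaintFromIn (KK n) 2 f U := by
  obtain ⟨i₀, hi₀U, hi₀f⟩ := hc
  refine pf_succ.mpr fun M hne hf => ?_
  by_cases hL : ∀ i : Fin 2, Sum.inl i ∈ U → Sum.inl i ∈ M
  · -- all uncolored left vertices are marked: color them all
    refine ⟨U.filter (fun v => v.isLeft), ?_, ?_, ?_⟩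
    · intro v hv
      rw [Finset.mem_filter] at hv
      obtain ⟨hvU, hvl⟩ := hv
      rw [Finset.mem_inter]
      cases v with
      | inl i => exact ⟨hL i hvU, hvU⟩
      | inr j => simp at hvl
    · refine indep_of_left _ fun v hv => ?_
      rw [Finset.mem_filter] at hv
      cases v with
      | inl i => exact ⟨i, rfl⟩
      | inr j => simp at hv
    · refine pf_indep 1 _ _ le_rfl (indep_of_right _ fun v hv => ?_) fun v hv => ?_
      all_goals
        rw [Finset.mem_sdiff, Finset.mem_filter] at hv
        obtain ⟨hvU, hvX⟩ := hv
      · cases v with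
        | inl i => exact absurd ⟨hvU, rfl⟩ hvX
        | inr j => exact ⟨j, rfl⟩
      · cases v with
        | inl i => exact absurd ⟨hvU, rfl⟩ hvX
        | inr j =>
          have := hb j hvU
          unfold decMark
          split <;> omega
  · push_neg at hL
    obtain ⟨i₁, hi₁U, hi₁M⟩ := hL
    refine ⟨(M ∩ U).filter (fun v => v.isRight), Finset.filter_subset _ _, ?_, ?_⟩
    · refine indep_of_right _ fun v hv => ?_
      rw [Finset.mem_filter] at hv
      cases v with
      | inl i => simp at hv
      | inr j => exact ⟨j, rfl⟩
    · by_cases hM0 : Sum.inl i₀ ∈ M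
      · by_cases hRM : ∀ j : Fin n, Sum.inr j ∈ U → Sum.inr j ∈ M
        · -- remaining uncolored vertices are all left, each with a mark left
          have hmem : ∀ v ∈ U \ (M ∩ U).filter (fun v => v.isRight),
              (∃ i : Fin 2, v = Sum.inl i) ∧ v ∈ U := by
            intro v hv
            rw [Finset.mem_sdiff, Finset.mem_filter, Finset.mem_inter] at hv
            obtain ⟨hvU, hvX⟩ := hv
            cases v with
            | inl i => exact ⟨⟨i, rfl⟩, hvU⟩
            | inr j => exact absurd ⟨⟨hRM j hvU, hvU⟩, rfl⟩ hvX
          refine pf_indep 1 _ _ le_rfl (indep_of_left _ fun v hv => (hmem v hv).1)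
            fun v hv => ?_
          obtain ⟨⟨i, rfl⟩, hvU⟩ := hmem v hv
          unfold decMark
          by_cases hiM : Sum.inl i ∈ M
          · rw [if_pos hiM]
            have hii : i = i₀ := by
              have h1 : i.val ≠ i₁.val := fun h => hi₁M ((Fin.ext h : i = i₁) ▸ hiM)
              have h2 : i₀.val ≠ i₁.val := fun h => hi₁M ((Fin.ext h : i₀ = i₁) ▸ hM0)
              have := i.isLt; have := i₀.isLt; have := i₁.isLt
              exact Fin.ext (by omega)
            rw [hii, hi₀f]
          · rw [if_neg hiM]
            exact ha _ hvU
        · push_neg at hRM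
          obtain ⟨j, hjU, hjM⟩ := hRM
          refine pf_default 1 _ _ ⟨Sum.inr j, ?_⟩
          unfold decMark
          rw [if_neg hjM, hb j hjU]
          omega
      · refine pf_default 1 _ _ ⟨Sum.inl i₀, ?_⟩
        unfold decMark
        rw [if_neg hM0, hi₀f]
        omega

lemma paintable_three (n : ℕ) : PaintableIn (KK n) (fun _ => 2) 3 := by
  show PaintFromIn (KK n) 3 _ _
  refine pf_succ.mpr fun M hne hf => ?_
  by_cases hL : ∀ i : Fin 2, Sum.inl i ∈ M
  · refine ⟨Finset.univ.filter (fun v => v.isLeft), ?_, ?_, ?_⟩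
    · intro v hv
      rw [Finset.mem_filter] at hv
      rw [Finset.mem_inter]
      cases v with
      | inl i => exact ⟨hL i, Finset.mem_univ _⟩
      | inr j => simp at hv
    · refine indep_of_left _ fun v hv => ?_
      rw [Finset.mem_filter] at hv
      cases v with
      | inl i => exact ⟨i, rfl⟩
      | inr j => simp at hv
    · refine pf_indep 2 _ _ (by norm_num) (indep_of_right _ fun v hv => ?_) fun v hv => ?_
      · rw [Finset.mem_sdiff, Finset.mem_filter] at hv
        cases v with
        | inl i => exact absurd ⟨Finset.mem_univ _, rfl⟩ hv.2
        | inr j => exact ⟨j, rfl⟩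
      · simp only [decMark]; split <;> omega
  · push_neg at hL
    obtain ⟨i₁, hi₁⟩ := hL
    refine ⟨M.filter (fun v => v.isRight), ?_, ?_, ?_⟩
    · intro v hv
      rw [Finset.mem_inter]
      exact ⟨Finset.filter_subset _ _ hv, Finset.mem_univ _⟩
    · refine indep_of_right _ fun v hv => ?_
      rw [Finset.mem_filter] at hv
      cases v with
      | inl i => simp at hv
      | inr j => exact ⟨j, rfl⟩
    · refine pf_two _ _ (fun v _ => by simp only [decMark]; split <;> omega) (fun j hj => ?_)
        ⟨i₁, ?_, ?_⟩
      · rw [Finset.mem_sdiff, Finset.mem_filter] at hj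
        have hjM : Sum.inr j ∉ M := fun h => hj.2 ⟨h, rfl⟩
        simp [decMark, hjM]
      · rw [Finset.mem_sdiff, Finset.mem_filter]
        exact ⟨Finset.mem_univ _, fun h => by simp at h⟩
      · simp [decMark, hi₁]

lemma paintable_two (n : ℕ) : PaintableIn (KK n) (fun _ => 2) 2 := by
  show PaintFromIn (KK n) 2 _ _
  refine pf_succ.mpr fun M hne hf => ?_
  by_cases hL : ∀ i : Fin 2, Sum.inl i ∈ M
  · refine ⟨Finset.univ.filter (fun v => v.isLeft), ?_, ?_, ?_⟩
    · intro v hv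
      rw [Finset.mem_filter] at hv
      rw [Finset.mem_inter]
      cases v with
      | inl i => exact ⟨hL i, Finset.mem_univ _⟩
      | inr j => simp at hv
    · refine indep_of_left _ fun v hv => ?_
      rw [Finset.mem_filter] at hv
      cases v with
      | inl i => exact ⟨i, rfl⟩
      | inr j => simp at hv
    · refine pf_indep 1 _ _ le_rfl (indep_of_right _ fun v hv => ?_) fun v hv => ?_
      · rw [Finset.mem_sdiff, Finset.mem_filter] at hv
        cases v with
        | inl i => exact absurd ⟨Finset.mem_univ _, rfl⟩ hv.2
        | inr j => exact ⟨j, rfl⟩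
      · simp only [decMark]; split <;> omega
  · push_neg at hL
    obtain ⟨i₁, hi₁⟩ := hL
    refine ⟨M.filter (fun v => v.isRight), ?_, ?_, ?_⟩
    · intro v hv
      rw [Finset.mem_inter]
      exact ⟨Finset.filter_subset _ _ hv, Finset.mem_univ _⟩
    · refine indep_of_right _ fun v hv => ?_
      rw [Finset.mem_filter] at hv
      cases v with
      | inl i => simp at hv
      | inr j => exact ⟨j, rfl⟩
    · refine pf_default 1 _ _ ⟨Sum.inl i₁, by simp [decMark, hi₁]⟩

end K2n

section Neg

variable (n : ℕ)

/-- Lister's four marked sets against `K_{2,n}`, encoding the bad list assignment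
`a:{1,2}, b:{3,4}, r₀:{1,3}, r₁:{1,4}, r₂:{2,3}, r₃:{2,4}`, extra rights `{1,3}`. -/
def MM1 : Finset (Fin 2 ⊕ Fin n) :=
  Finset.univ.filter fun v =>
    v = Sum.inl 0 ∨ ∃ j : Fin n, v = Sum.inr j ∧ (j.val = 0 ∨ j.val = 1 ∨ 4 ≤ j.val)

def MM2 : Finset (Fin 2 ⊕ Fin n) :=
  Finset.univ.filter fun v =>
    v = Sum.inl 0 ∨ ∃ j : Fin n, v = Sum.inr j ∧ (j.val = 2 ∨ j.val = 3)

def MM3 : Finset (Fin 2 ⊕ Fin n) :=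
  Finset.univ.filter fun v =>
    v = Sum.inl 1 ∨ ∃ j : Fin n, v = Sum.inr j ∧ (j.val = 0 ∨ j.val = 2 ∨ 4 ≤ j.val)

def MM4 : Finset (Fin 2 ⊕ Fin n) :=
  Finset.univ.filter fun v =>
    v = Sum.inl 1 ∨ ∃ j : Fin n, v = Sum.inr j ∧ (j.val = 1 ∨ j.val = 3)

@[simp] lemma mem_inl_MM1 (i : Fin 2) : (Sum.inl i : Fin 2 ⊕ Fin n) ∈ MM1 n ↔ i.val = 0 := by
  simp [MM1, Fin.val_eq_zero_iff]

@[simp] lemma mem_inr_MM1 (j : Fin n) :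
    (Sum.inr j : Fin 2 ⊕ Fin n) ∈ MM1 n ↔ (j.val = 0 ∨ j.val = 1 ∨ 4 ≤ j.val) := by
  simp [MM1]

@[simp] lemma mem_inl_MM2 (i : Fin 2) : (Sum.inl i : Fin 2 ⊕ Fin n) ∈ MM2 n ↔ i.val = 0 := by
  simp [MM2, Fin.val_eq_zero_iff]

@[simp] lemma mem_inr_MM2 (j : Fin n) :
    (Sum.inr j : Fin 2 ⊕ Fin n) ∈ MM2 n ↔ (j.val = 2 ∨ j.val = 3) := by
  simp [MM2]

@[simp] lemma mem_inl_MM3 (i : Fin 2) : (Sum.inl i : Fin 2 ⊕ Fin n) ∈ MM3 n ↔ i.val = 1 := by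
  simp [MM3, Fin.ext_iff]

@[simp] lemma mem_inr_MM3 (j : Fin n) :
    (Sum.inr j : Fin 2 ⊕ Fin n) ∈ MM3 n ↔ (j.val = 0 ∨ j.val = 2 ∨ 4 ≤ j.val) := by
  simp [MM3]

@[simp] lemma mem_inl_MM4 (i : Fin 2) : (Sum.inl i : Fin 2 ⊕ Fin n) ∈ MM4 n ↔ i.val = 1 := by
  simp [MM4, Fin.ext_iff]

@[simp] lemma mem_inr_MM4 (j : Fin n) :
    (Sum.inr j : Fin 2 ⊕ Fin n) ∈ MM4 n ↔ (j.val = 1 ∨ j.val = 3) := by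
  simp [MM4]

lemma not_paintable_four (hn : 4 ≤ n) : ¬ PaintableIn (KK n) (fun _ => 2) 4 := by
  intro h
  have h' : PaintFromIn (KK n) 4 (fun _ => 2) Finset.univ := h
  -- the four rounds
  have hne1 : (MM1 n).Nonempty := ⟨Sum.inl 0, by simp⟩
  have hne2 : (MM2 n).Nonempty := ⟨Sum.inl 0, by simp⟩
  have hne3 : (MM3 n).Nonempty := ⟨Sum.inl 1, by simp⟩
  have hne4 : (MM4 n).Nonempty := ⟨Sum.inl 1, by simp⟩
  obtain ⟨X1, hX1, hI1, h'⟩ := pf_succ.mp h' (MM1 n) hne1 (fun v _ => by norm_num)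
  obtain ⟨X2, hX2, hI2, h'⟩ := pf_succ.mp h' (MM2 n) hne2 (fun v _ => by
    simp only [decMark]; split <;> omega)
  obtain ⟨X3, hX3, hI3, h'⟩ := pf_succ.mp h' (MM3 n) hne3 (fun v hv => by
    rcases v with i | j
    · simp only [mem_inl_MM3] at hv
      simp only [decMark, mem_inl_MM1, mem_inl_MM2]
      split_ifs <;> omega
    · simp only [mem_inr_MM3] at hv
      simp only [decMark, mem_inr_MM1, mem_inr_MM2]
      split_ifs <;> omega)
  obtain ⟨X4, hX4, hI4, h'⟩ := pf_succ.mp h' (MM4 n) hne4 (fun v hv => by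
    rcases v with i | j
    · simp only [mem_inl_MM4] at hv
      simp only [decMark, mem_inl_MM1, mem_inl_MM2, mem_inl_MM3]
      split_ifs <;> omega
    · simp only [mem_inr_MM4] at hv
      simp only [decMark, mem_inr_MM1, mem_inr_MM2, mem_inr_MM3]
      split_ifs <;> omega)
  rcases pf_zero.mp h' with hU | ⟨v, hv⟩
  · -- every vertex got colored: derive a contradiction
    have hall : ∀ v : Fin 2 ⊕ Fin n, v ∈ X1 ∨ v ∈ X2 ∨ v ∈ X3 ∨ v ∈ X4 := by
      intro v
      by_contra hc
      push_neg at hc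
      exact Finset.eq_empty_iff_forall_notMem.mp hU v
        (by
          simp only [Finset.mem_sdiff, Finset.mem_univ, true_and]
          exact ⟨⟨⟨hc.1, hc.2.1⟩, hc.2.2.1⟩, hc.2.2.2⟩)
    have hX1M : ∀ v ∈ X1, v ∈ MM1 n := fun v hv => (Finset.mem_inter.mp (hX1 hv)).1
    have hX2M : ∀ v ∈ X2, v ∈ MM2 n := fun v hv => (Finset.mem_inter.mp (hX2 hv)).1
    have hX3M : ∀ v ∈ X3, v ∈ MM3 n := fun v hv => (Finset.mem_inter.mp (hX3 hv)).1
    have hX4M : ∀ v ∈ X4, v ∈ MM4 n := fun v hv => (Finset.mem_inter.mp (hX4 hv)).1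
    have hA : (Sum.inl 0 : Fin 2 ⊕ Fin n) ∈ X1 ∨ (Sum.inl 0 : Fin 2 ⊕ Fin n) ∈ X2 := by
      rcases hall (Sum.inl 0) with h | h | h | h
      · exact Or.inl h
      · exact Or.inr h
      · have := hX3M _ h; simp at this
      · have := hX4M _ h; simp at this
    have hB : (Sum.inl 1 : Fin 2 ⊕ Fin n) ∈ X3 ∨ (Sum.inl 1 : Fin 2 ⊕ Fin n) ∈ X4 := by
      rcases hall (Sum.inl 1) with h | h | h | h
      · have := hX1M _ h; simp at this
      · have := hX2M _ h; simp at this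
      · exact Or.inl h
      · exact Or.inr h
    have hadj : ∀ (i : Fin 2) (j : Fin n), (KK n).Adj (Sum.inl i) (Sum.inr j) := by
      intro i j; simp
    -- the four cases, with the four special right vertices
    rcases hA with hA | hA <;> rcases hB with hB | hB
    · -- a in round 1, b in round 3 : r₀ uncolored
      rcases hall (Sum.inr ⟨0, by omega⟩) with h | h | h | h
      · exact hI1 _ hA _ h (hadj _ _)
      · have := hX2M _ h; simp at this
      · exact hI3 _ hB _ h (hadj _ _)
      · have := hX4M _ h; simp at this
    · -- a in round 1, b in round 4 : r₁ uncolored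
      rcases hall (Sum.inr ⟨1, by omega⟩) with h | h | h | h
      · exact hI1 _ hA _ h (hadj _ _)
      · have := hX2M _ h; simp at this
      · have := hX3M _ h; simp at this
      · exact hI4 _ hB _ h (hadj _ _)
    · -- a in round 2, b in round 3 : r₂ uncolored
      rcases hall (Sum.inr ⟨2, by omega⟩) with h | h | h | h
      · have := hX1M _ h; simp at this
      · exact hI2 _ hA _ h (hadj _ _)
      · exact hI3 _ hB _ h (hadj _ _)
      · have := hX4M _ h; simp at this
    · -- a in round 2, b in round 4 : r₃ uncolored
      rcases hall (Sum.inr ⟨3, by omega⟩) with h | h | h | h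
      · have := hX1M _ h; simp at this
      · exact hI2 _ hA _ h (hadj _ _)
      · have := hX3M _ h; simp at this
      · exact hI4 _ hB _ h (hadj _ _)
  · -- every vertex was marked exactly twice
    apply hv
    rcases v with i | j
    · have := i.isLt
      simp only [decMark, mem_inl_MM1, mem_inl_MM2, mem_inl_MM3, mem_inl_MM4]
      split_ifs <;> omega
    · simp only [decMark, mem_inr_MM1, mem_inr_MM2, mem_inr_MM3, mem_inr_MM4]
      split_ifs <;> omega

end Neg


/-- Lemma `theta2`.  For every `n ≥ 4`, the complete bipartite graph
`K_{2,n}` satisfies `m(K_{2,n}) = 4`; that is, `K_{2,n}` is `[2,3]`-paintable but not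
`[2,4]`-paintable. -/
theorem mval_completeBipartite (n : ℕ) (hn : 4 ≤ n) :
    PaintGame.mval (completeBipartiteGraph (Fin 2) (Fin n)) (fun _ => 2) = 4 ∧
    PaintGame.PaintableIn (completeBipartiteGraph (Fin 2) (Fin n)) (fun _ => 2) 3 ∧
    ¬ PaintGame.PaintableIn (completeBipartiteGraph (Fin 2) (Fin n)) (fun _ => 2) 4 := by
  have hp2 := paintable_two n
  have hp3 := paintable_three n
  have hnp4 := not_paintable_four n hn
  refine ⟨?_, hp3, hnp4⟩
  unfold PaintGame.mval
  have h4 : 4 ∈ {t | (∀ v : Fin 2 ⊕ Fin n, (fun _ => 2) v ≤ t) ∧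
      ¬ PaintableIn (completeBipartiteGraph (Fin 2) (Fin n)) (fun _ => 2) t} :=
    ⟨fun _ => by norm_num, hnp4⟩
  have hmem := Nat.sInf_mem ⟨4, h4⟩
  have hle := Nat.sInf_le h4
  obtain ⟨hge, hnp⟩ := hmem
  have h2 : 2 ≤ sInf {t | (∀ v : Fin 2 ⊕ Fin n, (fun _ => 2) v ≤ t) ∧
      ¬ PaintableIn (completeBipartiteGraph (Fin 2) (Fin n)) (fun _ => 2) t} :=
    hge (Sum.inl 0)
  set m := sInf {t | (∀ v : Fin 2 ⊕ Fin n, (fun _ => 2) v ≤ t) ∧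
      ¬ PaintableIn (completeBipartiteGraph (Fin 2) (Fin n)) (fun _ => 2) t} with hm
  have : m = 2 ∨ m = 3 ∨ m = 4 := by omega
  rcases this with h | h | h
  · rw [h] at hnp; exact absurd hp2 hnp
  · rw [h] at hnp; exact absurd hp3 hnp
  · exact h
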